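/- Let n ≥ 1 be an integer and λ ∈ ℝ. Let φ : (−1,1) → ℝ be a positive, real analytic, even function, and define y(r) = 2/(n+2) − r·φ'(r)/φ(r) for r ∈ (−1,1). Assume: (i) (y(r) − 2λ/(n+2))^n · y'(r) = 2^{n+2}·r·φ(r)^{−(n+2)} for all r ∈ (−1,1); (ii) y'(r) > 0 for all r ∈ (0,1); and (iii) y(r) → +∞ as r → 1⁻. Then λ < 1. -/

import Mathlib

open Set Filter Topology

/-- if φ is positive, real analytic and even on (−1,1),
y(r) = 2/(n+2) − r·φ'/φ satisfies (y − 2λ/(n+2))ⁿ·y' = 2^{n+2}·r·φ^{−(n+2)},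
y' > 0 on (0,1) and y → +∞ as r → 1⁻, then λ < 1. -/
theorem stmt_18 (n : ℕ) (hn : 1 ≤ n) (lam : ℝ)
    (φ : ℝ → ℝ)
    (hφpos : ∀ r ∈ Ioo (-1 : ℝ) 1, 0 < φ r)
    (hφan : AnalyticOnNhd ℝ φ (Ioo (-1 : ℝ) 1))
    (hφeven : ∀ r ∈ Ioo (-1 : ℝ) 1, φ (-r) = φ r)
    (y : ℝ → ℝ)
    (hy : ∀ r : ℝ, y r = 2 / ((n : ℝ) + 2) - r * deriv φ r / φ r)
    (hODE : ∀ r ∈ Ioo (-1 : ℝ) 1,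
      (y r - 2 * lam / ((n : ℝ) + 2)) ^ n * deriv y r =
        2 ^ (n + 2) * r * φ r ^ (-((n : ℤ) + 2)))
    (hy' : ∀ r ∈ Ioo (0 : ℝ) 1, 0 < deriv y r)
    (hylim : Tendsto y (𝓝[<] (1 : ℝ)) atTop) :
    lam < 1 := by
  by_contra hlam
  push_neg at hlam
  have hn2 : (0 : ℝ) < (n : ℝ) + 2 := by positivity
  set c : ℝ := 2 / ((n : ℝ) + 2) with hc
  have h0mem : (0 : ℝ) ∈ Ioo (-1 : ℝ) 1 := by norm_num
  have hopen : IsOpen (Ioo (-1 : ℝ) 1) := isOpen_Ioo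
  have hφne : ∀ r ∈ Ioo (-1 : ℝ) 1, φ r ≠ 0 := fun r hr => (hφpos r hr).ne'
  -- y is analytic on (-1,1)
  have hyan : AnalyticOnNhd ℝ y (Ioo (-1 : ℝ) 1) := by
    have : AnalyticOnNhd ℝ (fun r => c - r * deriv φ r / φ r) (Ioo (-1 : ℝ) 1) := by
      intro r hr
      exact analyticAt_const.sub
        ((analyticAt_id.mul (hφan.deriv r hr)).div (hφan r hr) (hφne r hr))
    have hyf : y = fun r => c - r * deriv φ r / φ r := funext hy
    rw [hyf]; exact this
  have hycont : ContinuousOn y (Ioo (-1 : ℝ) 1) := hyan.continuousOn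
  have hy0 : y 0 = c := by rw [hy 0]; simp
  -- the field point positivity for the RHS at positive r
  have hRHSpos : ∀ r ∈ Ioo (-1 : ℝ) 1, 0 < r →
      0 < (2 : ℝ) ^ (n + 2) * r * φ r ^ (-((n : ℤ) + 2)) := by
    intro r hr hrpos
    have := hφpos r hr
    positivity
  rcases eq_or_lt_of_le hlam with hlam1 | hlam1
  · -- case lam = 1 : use analyticity and evenness at 0
    have hceq : 2 * lam / ((n : ℝ) + 2) = c := by rw [← hlam1]; ring
    -- y is even on (-1,1)
    have hyeven : ∀ r ∈ Ioo (-1 : ℝ) 1, y (-r) = y r := by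
      intro r hr
      have hrneg : -r ∈ Ioo (-1 : ℝ) 1 := by
        simp only [mem_Ioo] at hr ⊢; constructor <;> linarith [hr.1, hr.2]
      have hev : (fun x => φ (-x)) =ᶠ[𝓝 r] φ := by
        filter_upwards [hopen.mem_nhds hr] with x hx
        exact hφeven x hx
      have hderiv : deriv φ r = -deriv φ (-r) := by
        rw [← hev.deriv_eq, deriv_comp_neg]
      rw [hy r, hy (-r), hderiv, hφeven r hr]
      ring
    -- deriv y 0 = 0
    have hdy0 : deriv y 0 = 0 := by
      have hev : (fun x => y (-x)) =ᶠ[𝓝 (0 : ℝ)] y := by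
        filter_upwards [hopen.mem_nhds h0mem] with x hx
        exact hyeven x hx
      have h1 : deriv (fun x => y (-x)) 0 = deriv y 0 := hev.deriv_eq
      rw [deriv_comp_neg, neg_zero] at h1
      linarith
    -- y differentiable at 0 with derivative 0
    have hyda : HasDerivAt y 0 0 := by
      have := (hyan 0 h0mem).differentiableAt.hasDerivAt
      rwa [hdy0] at this
    have hslope : Tendsto (fun r => (y r - c) / r) (𝓝[≠] (0 : ℝ)) (𝓝 0) := by
      have := hasDerivAt_iff_tendsto_slope.1 hyda
      have heq : (fun r => (y r - c) / r) =ᶠ[𝓝[≠] (0 : ℝ)] slope y 0 := by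
        filter_upwards [self_mem_nhdsWithin] with x hx
        simp [slope, hy0, hx, div_eq_inv_mul]
      exact Tendsto.congr' heq.symm this
    -- deriv y is continuous at 0 with value 0
    have hdycont : Tendsto (deriv y) (𝓝 (0 : ℝ)) (𝓝 0) := by
      have h := ((hyan.deriv) 0 h0mem).continuousAt.tendsto
      rwa [hdy0] at h
    -- second factor tends to 0
    have hT2 : Tendsto (fun r => (y r - c) ^ (n - 1) * deriv y r) (𝓝[≠] (0 : ℝ)) (𝓝 0) := by
      have hyc : Tendsto (fun r => (y r - c) ^ (n - 1)) (𝓝 (0 : ℝ))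
          (𝓝 ((y 0 - c) ^ (n - 1))) :=
        (((hyan 0 h0mem).continuousAt.sub continuousAt_const).pow (n - 1))
      have h3 : Tendsto (fun r => (y r - c) ^ (n - 1) * deriv y r) (𝓝[≠] (0 : ℝ))
          (𝓝 ((y 0 - c) ^ (n - 1) * 0)) :=
        (hyc.mul hdycont).mono_left nhdsWithin_le_nhds
      simpa using h3
    -- LHS / r tends to 0
    have hLHS : Tendsto (fun r => ((y r - c) ^ n * deriv y r) / r) (𝓝[≠] (0 : ℝ)) (𝓝 0) := by
      have heq : (fun r => ((y r - c) ^ n * deriv y r) / r)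
          =ᶠ[𝓝[≠] (0 : ℝ)]
          (fun r => ((y r - c) / r) * ((y r - c) ^ (n - 1) * deriv y r)) := by
        filter_upwards [self_mem_nhdsWithin] with x hx
        have hx0 : x ≠ 0 := hx
        have hne : (y x - c) ^ n = (y x - c) * (y x - c) ^ (n - 1) := by
          conv_lhs => rw [show n = (n - 1) + 1 from (Nat.succ_pred_eq_of_pos hn).symm]
          ring
        field_simp [hne]
        rw [hne]; ring
      have := (hslope.mul hT2)
      rw [zero_mul] at this
      exact Tendsto.congr' heq.symm this
    -- RHS / r tends to positive constant
    have hφ0 : (0 : ℝ) < φ 0 := hφpos 0 h0mem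
    have hRHS : Tendsto (fun r => ((2 : ℝ) ^ (n + 2) * r * φ r ^ (-((n : ℤ) + 2))) / r)
        (𝓝[≠] (0 : ℝ)) (𝓝 ((2 : ℝ) ^ (n + 2) * φ 0 ^ (-((n : ℤ) + 2)))) := by
      have hcont : Tendsto (fun r => (2 : ℝ) ^ (n + 2) * φ r ^ (-((n : ℤ) + 2)))
          (𝓝 (0 : ℝ)) (𝓝 ((2 : ℝ) ^ (n + 2) * φ 0 ^ (-((n : ℤ) + 2)))) := by
        exact tendsto_const_nhds.mul
          (((hφan 0 h0mem).continuousAt.zpow₀ _ (Or.inl hφ0.ne')))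
      have heq : (fun r => ((2 : ℝ) ^ (n + 2) * r * φ r ^ (-((n : ℤ) + 2))) / r)
          =ᶠ[𝓝[≠] (0 : ℝ)]
          (fun r => (2 : ℝ) ^ (n + 2) * φ r ^ (-((n : ℤ) + 2))) := by
        filter_upwards [self_mem_nhdsWithin] with x hx
        have hx0 : x ≠ 0 := hx
        field_simp
      exact Tendsto.congr' heq.symm (hcont.mono_left nhdsWithin_le_nhds)
    -- the two functions agree near 0
    have hagree : (fun r => ((y r - c) ^ n * deriv y r) / r)
        =ᶠ[𝓝[≠] (0 : ℝ)]
        (fun r => ((2 : ℝ) ^ (n + 2) * r * φ r ^ (-((n : ℤ) + 2))) / r) := by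
      filter_upwards [nhdsWithin_le_nhds (hopen.mem_nhds h0mem)] with x hx
      have := hODE x hx
      rw [hceq] at this
      rw [this]
    have huniq : (0 : ℝ) = (2 : ℝ) ^ (n + 2) * φ 0 ^ (-((n : ℤ) + 2)) :=
      tendsto_nhds_unique (hLHS.congr' hagree) hRHS
    have : (0 : ℝ) < (2 : ℝ) ^ (n + 2) * φ 0 ^ (-((n : ℤ) + 2)) := by positivity
    linarith
  · -- case lam > 1 : intermediate value theorem
    set m : ℝ := 2 * lam / ((n : ℝ) + 2) with hm
    have hcm : c < m := by
      rw [hc, hm]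
      exact (div_lt_div_iff_of_pos_right hn2).2 (by linarith)
    -- find t ∈ (0,1) with y t > m
    have hev : ∀ᶠ t in 𝓝[<] (1 : ℝ), m < y t ∧ t ∈ Ioo (0 : ℝ) 1 := by
      have h1 : ∀ᶠ t in 𝓝[<] (1 : ℝ), m < y t := hylim.eventually_gt_atTop m
      have h2 : ∀ᶠ t in 𝓝[<] (1 : ℝ), t ∈ Ioo (0 : ℝ) 1 := by
        have : Ioo (0 : ℝ) 1 ∈ 𝓝[<] (1 : ℝ) := Ioo_mem_nhdsLT_of_mem (by norm_num)
        exact eventually_of_mem this fun x hx => hx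
      exact h1.and h2
    obtain ⟨t, htm, ht⟩ := hev.exists
    have htIcc : Icc (0 : ℝ) t ⊆ Ioo (-1 : ℝ) 1 := by
      intro x hx
      constructor <;> [linarith [hx.1]; exact lt_of_le_of_lt hx.2 ht.2]
    have hIVT : m ∈ y '' Icc 0 t := by
      have : y 0 ≤ m ∧ m ≤ y t := ⟨by rw [hy0]; linarith, le_of_lt htm⟩
      exact intermediate_value_Icc (le_of_lt ht.1) (hycont.mono htIcc) ⟨this.1, this.2⟩
    obtain ⟨r₀, hr₀, hyr₀⟩ := hIVT
    have hr₀0 : r₀ ≠ 0 := by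
      intro h
      rw [h, hy0] at hyr₀
      linarith
    have hr₀pos : 0 < r₀ := lt_of_le_of_ne hr₀.1 (Ne.symm hr₀0)
    have hr₀mem : r₀ ∈ Ioo (-1 : ℝ) 1 := htIcc hr₀
    have hode := hODE r₀ hr₀mem
    rw [hyr₀, sub_self, zero_pow (by omega), zero_mul] at hode
    have := hRHSpos r₀ hr₀mem hr₀pos
    linarith
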